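/- A permutation τ ∈ Sₙ has at most one descent if and only if τ avoids the patterns 321, 2143, and 3142. -/
import Mathlib


/-- `τ` contains the pattern `ρ`: some subsequence of the one-line notation of
`τ` is in the same relative order as `ρ`. -/
def ContainsPat {n m : ℕ} (τ : Fin n → Fin n) (ρ : Fin m → Fin m) : Prop :=
  ∃ f : Fin m ↪o Fin n, ∀ j l : Fin m, ρ j < ρ l ↔ τ (f j) < τ (f l)

def AvoidsPat {n m : ℕ} (τ : Fin n → Fin n) (ρ : Fin m → Fin m) : Prop :=
  ¬ ContainsPat τ ρ

/-- The set of descent positions of `τ` (positions `i` with `τ i > τ (i+1)`). -/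
def descSet {n : ℕ} (τ : Equiv.Perm (Fin n)) : Finset (Fin n) :=
  Finset.univ.filter (fun i => ∃ j : Fin n, (j : ℕ) = (i : ℕ) + 1 ∧ τ j < τ i)

lemma mem_descSet {n : ℕ} (τ : Equiv.Perm (Fin n)) (i : Fin n) :
    i ∈ descSet τ ↔ ∃ j : Fin n, (j : ℕ) = (i : ℕ) + 1 ∧ τ j < τ i := by
  simp [descSet]

/-- A drop between `a` and `b` forces a descent in `[a, b)`. -/
lemma exists_desc {n : ℕ} (τ : Equiv.Perm (Fin n)) :
    ∀ k : ℕ, ∀ a b : Fin n, (b : ℕ) ≤ (a : ℕ) + k → a < b → τ b < τ a →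
      ∃ i, i ∈ descSet τ ∧ a ≤ i ∧ i < b := by
  intro k
  induction k with
  | zero =>
    intro a b hk hab _
    rw [Fin.lt_def] at hab
    omega
  | succ k ih =>
    intro a b hk hab hτ
    have hab' : (a : ℕ) + 1 ≤ (b : ℕ) := by rw [Fin.lt_def] at hab; omega
    have hb : (a : ℕ) + 1 < n := lt_of_le_of_lt hab' b.isLt
    set j : Fin n := ⟨(a : ℕ) + 1, hb⟩ with hj
    by_cases h : τ j < τ a
    · exact ⟨a, (mem_descSet τ a).2 ⟨j, rfl, h⟩, le_refl a, hab⟩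
    · push_neg at h
      have hjb : τ b < τ j := lt_of_lt_of_le hτ h
      have hjb' : j < b := by
        rcases lt_or_eq_of_le (show (j : ℕ) ≤ (b : ℕ) from hab') with h' | h'
        · exact h'
        · exact absurd (Fin.val_injective h' ▸ hjb) (lt_irrefl _)
      obtain ⟨i, hi, hji, hib⟩ := ih j b (by simp [hj]; omega) hjb' hjb
      exact ⟨i, hi, le_trans (by rw [Fin.le_def]; simp [hj]) hji, hib⟩

/-- Two disjoint drops force at least two descents. -/
lemma two_desc {n : ℕ} (τ : Equiv.Perm (Fin n)) (a b c d : Fin n)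
    (hab : a < b) (hbc : b ≤ c) (hcd : c < d)
    (h1 : τ b < τ a) (h2 : τ d < τ c) : 1 < (descSet τ).card := by
  obtain ⟨i, hi, hai, hib⟩ := exists_desc τ (b : ℕ) a b (by omega) hab h1
  obtain ⟨i', hi', hci', hid⟩ := exists_desc τ (d : ℕ) c d (by omega) hcd h2
  have : i < i' := lt_of_lt_of_le hib (le_trans hbc hci')
  exact Finset.one_lt_card.2 ⟨i, hi, i', hi', ne_of_lt this⟩

lemma contains321 {n : ℕ} (τ : Equiv.Perm (Fin n)) (a b c : Fin n)
    (hab : a < b) (hbc : b < c) (h1 : τ b < τ a) (h2 : τ c < τ b) :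
    ContainsPat (⇑τ) (![2, 1, 0] : Fin 3 → Fin 3) := by
  have h3 : τ c < τ a := lt_trans h2 h1
  refine ⟨OrderEmbedding.ofStrictMono ![a, b, c] ?_, ?_⟩
  · rw [Fin.strictMono_iff_lt_succ]
    intro i; fin_cases i <;> simpa
  · intro j l
    fin_cases j <;> fin_cases l <;>
      simp [ContainsPat, OrderEmbedding.ofStrictMono] <;>
      first
        | exact h1 | exact h2 | exact h3
        | exact le_of_lt h1 | exact le_of_lt h2 | exact le_of_lt h3

lemma contains2143 {n : ℕ} (τ : Equiv.Perm (Fin n)) (a b c d : Fin n)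
    (hab : a < b) (hbc : b < c) (hcd : c < d)
    (h1 : τ b < τ a) (h2 : τ a < τ d) (h3 : τ d < τ c) :
    ContainsPat (⇑τ) (![1, 0, 3, 2] : Fin 4 → Fin 4) := by
  have h4 : τ b < τ d := lt_trans h1 h2
  have h5 : τ a < τ c := lt_trans h2 h3
  have h6 : τ b < τ c := lt_trans h4 h3
  refine ⟨OrderEmbedding.ofStrictMono ![a, b, c, d] ?_, ?_⟩
  · rw [Fin.strictMono_iff_lt_succ]
    intro i; fin_cases i <;> simpa
  · intro j l
    fin_cases j <;> fin_cases l <;>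
      simp [ContainsPat, OrderEmbedding.ofStrictMono] <;>
      first
        | exact h1 | exact h2 | exact h3 | exact h4 | exact h5 | exact h6
        | exact le_of_lt h1 | exact le_of_lt h2 | exact le_of_lt h3
        | exact le_of_lt h4 | exact le_of_lt h5 | exact le_of_lt h6

lemma contains3142 {n : ℕ} (τ : Equiv.Perm (Fin n)) (a b c d : Fin n)
    (hab : a < b) (hbc : b < c) (hcd : c < d)
    (h1 : τ b < τ d) (h2 : τ d < τ a) (h3 : τ a < τ c) :
    ContainsPat (⇑τ) (![2, 0, 3, 1] : Fin 4 → Fin 4) := by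
  have h4 : τ b < τ a := lt_trans h1 h2
  have h5 : τ d < τ c := lt_trans h2 h3
  have h6 : τ b < τ c := lt_trans h4 h3
  refine ⟨OrderEmbedding.ofStrictMono ![a, b, c, d] ?_, ?_⟩
  · rw [Fin.strictMono_iff_lt_succ]
    intro i; fin_cases i <;> simpa
  · intro j l
    fin_cases j <;> fin_cases l <;>
      simp [ContainsPat, OrderEmbedding.ofStrictMono] <;>
      first
        | exact h1 | exact h2 | exact h3 | exact h4 | exact h5 | exact h6
        | exact le_of_lt h1 | exact le_of_lt h2 | exact le_of_lt h3
        | exact le_of_lt h4 | exact le_of_lt h5 | exact le_of_lt h6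

theorem stmt6 (n : ℕ) (τ : Equiv.Perm (Fin n)) :
    (descSet τ).card ≤ 1 ↔
      (AvoidsPat (⇑τ) (![2, 1, 0] : Fin 3 → Fin 3) ∧
       AvoidsPat (⇑τ) (![1, 0, 3, 2] : Fin 4 → Fin 4) ∧
       AvoidsPat (⇑τ) (![2, 0, 3, 1] : Fin 4 → Fin 4)) := by
  constructor
  · intro hcard
    refine ⟨?_, ?_, ?_⟩
    · rintro ⟨f, hf⟩
      have d1 : τ (f 1) < τ (f 0) := (hf 1 0).1 (by decide)
      have d2 : τ (f 2) < τ (f 1) := (hf 2 1).1 (by decide)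
      have := two_desc τ (f 0) (f 1) (f 1) (f 2)
        (f.strictMono (by decide)) (le_refl _) (f.strictMono (by decide)) d1 d2
      omega
    · rintro ⟨f, hf⟩
      have d1 : τ (f 1) < τ (f 0) := (hf 1 0).1 (by decide)
      have d2 : τ (f 3) < τ (f 2) := (hf 3 2).1 (by decide)
      have := two_desc τ (f 0) (f 1) (f 2) (f 3)
        (f.strictMono (by decide)) (le_of_lt (f.strictMono (by decide)))
        (f.strictMono (by decide)) d1 d2
      omega
    · rintro ⟨f, hf⟩
      have d1 : τ (f 1) < τ (f 0) := (hf 1 0).1 (by decide)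
      have d2 : τ (f 3) < τ (f 2) := (hf 3 2).1 (by decide)
      have := two_desc τ (f 0) (f 1) (f 2) (f 3)
        (f.strictMono (by decide)) (le_of_lt (f.strictMono (by decide)))
        (f.strictMono (by decide)) d1 d2
      omega
  · rintro ⟨hA, hB, hC⟩
    by_contra hc
    push_neg at hc
    obtain ⟨i, hi, k, hk, hik⟩ := Finset.one_lt_card.1 hc
    -- WLOG i < k
    wlog hlt : i < k generalizing i k
    · exact this k hk i hi hik.symm (lt_of_le_of_ne (not_lt.1 hlt) hik.symm)
    obtain ⟨j, hj, hji⟩ := (mem_descSet τ i).1 hi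
    obtain ⟨l, hl, hlk⟩ := (mem_descSet τ k).1 hk
    have hij : i < j := by rw [Fin.lt_def]; omega
    have hkl : k < l := by rw [Fin.lt_def]; omega
    have hjk : j ≤ k := by rw [Fin.le_def, Fin.lt_def] at *; omega
    rcases lt_or_eq_of_le hjk with hjk' | hjk'
    · -- four positions i < j < k < l
      have hbd : τ j ≠ τ l := fun h => by
        have : j = l := τ.injective h
        rw [this] at hjk'
        exact absurd (lt_trans hjk' hkl) (lt_irrefl l)
      rcases lt_or_gt_of_ne hbd with hbd' | hbd'
      · -- τ j < τ l
        have hac : τ i ≠ τ k := fun h => by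
          have : i = k := τ.injective h
          exact hik this
        rcases lt_or_gt_of_ne hac with hac' | hac'
        · -- τ i < τ k: compare τ i and τ l
          have had : τ i ≠ τ l := fun h => by
            have : i = l := τ.injective h
            rw [this] at hij
            exact absurd (lt_trans hij (lt_trans hjk' hkl)) (lt_irrefl l)
          rcases lt_or_gt_of_ne had with had' | had'
          · exact hB (contains2143 τ i j k l hij hjk' hkl hji had' hlk)
          · exact hC (contains3142 τ i j k l hij hjk' hkl hbd' had' hac')
        · -- τ k < τ i: 321 on i, k, l
          exact hA (contains321 τ i k l (lt_trans hij hjk') hkl hac' hlk)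
      · -- τ l < τ j: 321 on i, j, l
        exact hA (contains321 τ i j l hij (lt_trans hjk' hkl) hji hbd')
    · -- j = k: 321 on i, j, l
      subst hjk'
      exact hA (contains321 τ i j l hij hkl hji hlk)
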